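/- For every integer b ≥ 3, setting q = |[3, b, 2*7, 3, 2*(b−2)]|, one has in the rational numbers: 1 − (3 + |[2*7, 3, 2*(b−2)]|)/q − (1 + |[3, b, 2*7, 3, 2*(b−3)]|)/q = 18(b−2)/q; in particular this quantity (which equals E·f*(K_{S(b)}) for the relevant (−1)-curve E) is positive for b > 2. -/

import Mathlib

/-- Hirzebruch–Jung numerator: |[]| = 1, |[n]| = n,
|[n₁, n₂, …]| = n₁·|[n₂, …]| − |[n₃, …]|. -/
def hj : List ℤ → ℤ
  | [] => 1
  | [n] => n
  | n :: m :: l => n * hj (m :: l) - hj l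

def hjt : List ℤ → ℤ
  | [] => 0
  | _ :: l => hj l

lemma hj_cons (x : ℤ) (l : List ℤ) : hj (x :: l) = x * hj l - hjt l := by
  cases l <;> simp [hj, hjt]

lemma hjt_cons (x : ℤ) (l : List ℤ) : hjt (x :: l) = hj l := rfl

lemma hj_rep_append (k : ℕ) (l : List ℤ) :
    hj (List.replicate k 2 ++ l) = (k + 1) * hj l - k * hjt l ∧
    hjt (List.replicate k 2 ++ l) = k * hj l - ((k : ℤ) - 1) * hjt l := by
  induction k with
  | zero => simp [hjt]; try ring
  | succ n ih =>
    simp only [List.replicate_succ, List.cons_append, hj_cons, hjt_cons]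
    rw [ih.1, ih.2]
    push_cast
    constructor <;> ring

lemma hj_L1 (K : ℕ) :
    hj (List.replicate 7 2 ++ (3:ℤ) :: List.replicate K 2) = 9 * K + 17 ∧
    hjt (List.replicate 7 2 ++ (3:ℤ) :: List.replicate K 2) = 8 * K + 15 := by
  have h1 := hj_rep_append K ([] : List ℤ)
  simp only [List.append_nil] at h1
  have h2 : hj ((3:ℤ) :: List.replicate K 2) = 2 * K + 3 := by
    rw [hj_cons, h1.1, h1.2]; simp [hj, hjt]; try ring
  have h3 : hjt ((3:ℤ) :: List.replicate K 2) = K + 1 := by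
    rw [hjt_cons, h1.1]; simp [hj, hjt]; try ring
  have h4 := hj_rep_append 7 ((3:ℤ) :: List.replicate K 2)
  rw [h2, h3] at h4
  refine ⟨?_, ?_⟩
  · rw [h4.1]; push_cast; ring
  · rw [h4.2]; push_cast; ring

lemma hj_L3 (b : ℤ) (K : ℕ) :
    hj ((3:ℤ) :: b :: (List.replicate 7 2 ++ (3:ℤ) :: List.replicate K 2)) =
      3 * (b * (9 * K + 17) - (8 * K + 15)) - (9 * K + 17) := by
  rw [hj_cons, hj_cons, hjt_cons, (hj_L1 K).1, (hj_L1 K).2]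
  try ring

theorem Ef_K_Sb (b : ℤ) (hb : 3 ≤ b)
    (q : ℤ) (hq : q = hj ([3, b] ++ List.replicate 7 2 ++ [3] ++ List.replicate (b - 2).toNat 2)) :
    (1 : ℚ) -
        (3 + (hj (List.replicate 7 2 ++ [3] ++ List.replicate (b - 2).toNat 2) : ℚ)) / (q : ℚ) -
        (1 + (hj ([3, b] ++ List.replicate 7 2 ++ [3] ++
          List.replicate (b - 3).toNat 2) : ℚ)) / (q : ℚ) =
      (18 * ((b : ℚ) - 2)) / (q : ℚ) ∧
    (0 : ℚ) < (18 * ((b : ℚ) - 2)) / (q : ℚ) := by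
  set K := (b - 2).toNat with hK
  set J := (b - 3).toNat with hJ
  have hKZ : (K : ℤ) = b - 2 := Int.toNat_of_nonneg (by omega)
  have hJZ : (J : ℤ) = b - 3 := Int.toNat_of_nonneg (by omega)
  have e1 : ([3, b] ++ List.replicate 7 2 ++ [3] ++ List.replicate K 2 : List ℤ) =
      (3:ℤ) :: b :: (List.replicate 7 2 ++ (3:ℤ) :: List.replicate K 2) := by
    simp [List.append_assoc]
  have e2 : ([3, b] ++ List.replicate 7 2 ++ [3] ++ List.replicate J 2 : List ℤ) =
      (3:ℤ) :: b :: (List.replicate 7 2 ++ (3:ℤ) :: List.replicate J 2) := by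
    simp [List.append_assoc]
  have e3 : (List.replicate 7 2 ++ [3] ++ List.replicate K 2 : List ℤ) =
      List.replicate 7 2 ++ (3:ℤ) :: List.replicate K 2 := by
    simp [List.append_assoc]
  rw [e1, hj_L3] at hq
  have hqval : q = 27 * b ^ 2 - 36 * b + 4 := by rw [hq, hKZ]; ring
  have hv1 : hj (List.replicate 7 2 ++ [3] ++ List.replicate K 2) = 9 * (b - 2) + 17 := by
    rw [e3, (hj_L1 K).1, hKZ]
  have hv2 : hj ([3, b] ++ List.replicate 7 2 ++ [3] ++ List.replicate J 2) =
      27 * b ^ 2 - 63 * b + 37 := by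
    rw [e2, hj_L3, hJZ]; ring
  have hqpos : (0 : ℤ) < q := by rw [hqval]; nlinarith
  have hqQ : ((q : ℚ)) ≠ 0 := by
    exact_mod_cast (ne_of_gt hqpos)
  constructor
  · rw [hv1, hv2, hqval]
    have hne : ((27 * b ^ 2 - 36 * b + 4 : ℤ) : ℚ) ≠ 0 := by
      rw [hqval] at hqQ; exact hqQ
    push_cast at hne ⊢
    rw [sub_sub, ← add_div, one_sub_div hne]
    congr 1
    ring
  · apply div_pos
    · have : (3 : ℚ) ≤ (b : ℚ) := by exact_mod_cast hb
      linarith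
    · exact_mod_cast hqpos
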